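/- (Lemma 7.1, transverse monotonicity, for bundles over compact hyperbolic surfaces.) Let Γ be a cocompact Fuchsian group acting on [0,1] by homeomorphisms fixing 0 and 1, and assume that no point x ∈ (0,1) has a finite Γ-orbit. Let f̃ : 𝔻 × [0,1] → ℝ be a Γ-invariant leafwise harmonic function with f̃(z,0) = 0 and f̃(z,1) = 1 for all z ∈ 𝔻. Then for every z ∈ 𝔻 the function x ↦ f̃(z,x) is weakly monotone increasing on [0,1]. -/

import Mathlib

open Metric Set Filter

noncomputable section

/-- The open unit disc in `ℂ`. -/
def unitDisc : Set ℂ := Metric.ball 0 1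

/-- A function `f : ℂ → ℝ` is harmonic on a set `U ⊆ ℂ` if, locally on `U`, it is
the real part of a holomorphic function (for open `U` this is equivalent to being
`C²` with vanishing Laplacian). -/
def HarmonicOnSet (f : ℂ → ℝ) (U : Set ℂ) : Prop :=
  ∀ z ∈ U, ∃ r > 0, Metric.ball z r ⊆ U ∧
    ∃ g : ℂ → ℂ, DifferentiableOn ℂ g (Metric.ball z r) ∧
      ∀ w ∈ Metric.ball z r, f w = (g w).re

/-- `ρ` is a cocompact Fuchsian group action of `Γ` on the open unit disc: a faithful,
properly discontinuous, cocompact action by Möbius transformations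
`z ↦ (αz+β)/(β̄z+ᾱ)` with `|α|² - |β|² = 1`. -/
structure IsCocompactFuchsian (Γ : Type*) [Group Γ] (ρ : Γ → ℂ → ℂ) : Prop where
  one_act : ∀ z ∈ unitDisc, ρ 1 z = z
  mul_act : ∀ γ₁ γ₂ : Γ, ∀ z ∈ unitDisc, ρ (γ₁ * γ₂) z = ρ γ₁ (ρ γ₂ z)
  maps_disc : ∀ γ : Γ, ∀ z ∈ unitDisc, ρ γ z ∈ unitDisc
  moebius : ∀ γ : Γ, ∃ α β : ℂ, ‖α‖ ^ 2 - ‖β‖ ^ 2 = 1 ∧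
    ∀ z ∈ unitDisc, ρ γ z = (α * z + β) / ((starRingEnd ℂ) β * z + (starRingEnd ℂ) α)
  faithful : ∀ γ : Γ, (∀ z ∈ unitDisc, ρ γ z = z) → γ = 1
  properly_discontinuous : ∀ K : Set ℂ, K ⊆ unitDisc → IsCompact K →
    {γ : Γ | ((ρ γ '' K) ∩ K).Nonempty}.Finite
  cocompact : ∃ K : Set ℂ, K ⊆ unitDisc ∧ IsCompact K ∧ ∀ z ∈ unitDisc, ∃ γ : Γ, ρ γ z ∈ K

/-- `σ` is an action of the group `Γ` on the topological space `X` by homeomorphisms. -/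
structure IsActionByHomeomorphisms (Γ : Type*) [Group Γ] (X : Type*) [TopologicalSpace X]
    (σ : Γ → X → X) : Prop where
  one_act : ∀ x : X, σ 1 x = x
  mul_act : ∀ γ₁ γ₂ : Γ, ∀ x : X, σ (γ₁ * γ₂) x = σ γ₁ (σ γ₂ x)
  continuous_act : ∀ γ : Γ, Continuous (σ γ)

/-- Difference of harmonic functions is harmonic. -/
lemma HarmonicOnSet.sub' {f g : ℂ → ℝ} {U : Set ℂ} (hf : HarmonicOnSet f U)
    (hg : HarmonicOnSet g U) : HarmonicOnSet (fun z => f z - g z) U := by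
  intro z hz
  obtain ⟨r₁, hr₁, hb₁, F, hF, hfF⟩ := hf z hz
  obtain ⟨r₂, hr₂, hb₂, G, hG, hgG⟩ := hg z hz
  refine ⟨min r₁ r₂, lt_min hr₁ hr₂, (Metric.ball_subset_ball (min_le_left _ _)).trans hb₁,
    fun w => F w - G w, (hF.mono (Metric.ball_subset_ball (min_le_left _ _))).sub
      (hG.mono (Metric.ball_subset_ball (min_le_right _ _))), fun w hw => ?_⟩
  show f w - g w = (F w - G w).re
  rw [Complex.sub_re, hfF w (Metric.ball_subset_ball (min_le_left _ _) hw),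
    hgG w (Metric.ball_subset_ball (min_le_right _ _) hw)]

lemma isOpen_unitDisc : IsOpen unitDisc := Metric.isOpen_ball

lemma isPreconnected_unitDisc : IsPreconnected unitDisc :=
  (convex_ball (0 : ℂ) 1).isPreconnected

/-- Strong minimum principle: a harmonic function on the disc attaining its infimum is
constant. -/
lemma harmonic_min_principle {F : ℂ → ℝ} (hF : HarmonicOnSet F unitDisc)
    (hc : ContinuousOn F unitDisc) {z₀ : ℂ} (hz₀ : z₀ ∈ unitDisc)
    (hmin : ∀ z ∈ unitDisc, F z₀ ≤ F z) : ∀ z ∈ unitDisc, F z = F z₀ := by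
  set m := F z₀ with hm
  set A : Set ℂ := {z | z ∈ unitDisc ∧ F z = m} with hA
  set B : Set ℂ := unitDisc ∩ F ⁻¹' (Set.Ioi m) with hB
  have hAopen : IsOpen A := by
    rw [Metric.isOpen_iff]
    rintro z ⟨hzU, hzm⟩
    obtain ⟨r, hr, hball, g, hg, hfg⟩ := hF z hzU
    refine ⟨r, hr, fun w hw => ⟨hball hw, ?_⟩⟩
    set φ : ℂ → ℂ := fun w => Complex.exp (-g w) with hφ
    have hφd : DifferentiableOn ℂ φ (Metric.ball z r) := hg.neg.cexp
    have hnorm : ∀ u ∈ Metric.ball z r, ‖φ u‖ = Real.exp (-(F u)) := by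
      intro u hu
      rw [hφ]
      simp only [Complex.norm_exp, Complex.neg_re]
      rw [hfg u hu]
    have hzball : z ∈ Metric.ball z r := Metric.mem_ball_self hr
    have hmax : IsMaxOn (norm ∘ φ) (Metric.ball z r) z := by
      intro u hu
      simp only [Function.comp_apply, Set.mem_setOf_eq]
      rw [hnorm u hu, hnorm z hzball, hzm]
      exact Real.exp_le_exp.2 (neg_le_neg (hmin u (hball hu)))
    have := Complex.norm_eqOn_of_isPreconnected_of_isMaxOn
      (convex_ball z r).isPreconnected Metric.isOpen_ball hφd hzball hmax hw
    simp only [Function.comp_apply, Function.const_apply] at this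
    rw [hnorm w hw, hnorm z hzball, hzm] at this
    have := Real.exp_injective this
    linarith
  have hBopen : IsOpen B := hc.isOpen_inter_preimage isOpen_unitDisc isOpen_Ioi
  intro z hz
  by_contra hne
  have hzB : z ∈ B := ⟨hz, lt_of_le_of_ne (hmin z hz) (Ne.symm hne)⟩
  have hsub : unitDisc ⊆ A ∪ B := by
    intro w hw
    rcases eq_or_lt_of_le (hmin w hw) with h | h
    · exact Or.inl ⟨hw, h.symm⟩
    · exact Or.inr ⟨hw, h⟩
  obtain ⟨w, -, hwA, hwB⟩ := isPreconnected_unitDisc A B hAopen hBopen hsub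
    ⟨z₀, hz₀, hz₀, rfl⟩ ⟨z, hz, hzB⟩
  exact absurd hwA.2 (ne_of_gt hwB.2)

/-- Existence of a leaf on which an invariant leafwise harmonic function is constantly equal
to its global infimum. -/
lemma exists_min_leaf {Γ : Type*} [Group Γ] {ρ : Γ → ℂ → ℂ} (hΓ : IsCocompactFuchsian Γ ρ)
    {X : Type*} [TopologicalSpace X] [CompactSpace X] [Nonempty X]
    (τ : Γ → X → X) (F : ℂ → X → ℝ)
    (hFc : ContinuousOn (fun p : ℂ × X => F p.1 p.2) (unitDisc ×ˢ (univ : Set X)))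
    (hFh : ∀ x : X, HarmonicOnSet (fun z => F z x) unitDisc)
    (hFinv : ∀ γ : Γ, ∀ z ∈ unitDisc, ∀ x : X, F (ρ γ z) (τ γ x) = F z x) :
    ∃ x₀ : X, ∃ m : ℝ, (∀ z ∈ unitDisc, F z x₀ = m) ∧ ∀ z ∈ unitDisc, ∀ x : X, m ≤ F z x := by
  obtain ⟨K, hKsub, hKcomp, hKcover⟩ := hΓ.cocompact
  have h0 : (0 : ℂ) ∈ unitDisc := by simp [unitDisc]
  obtain ⟨γ₀, hγ₀⟩ := hKcover 0 h0
  have hKX : IsCompact (K ×ˢ (univ : Set X)) := hKcomp.prod isCompact_univ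
  have hKXne : (K ×ˢ (univ : Set X)).Nonempty :=
    ⟨(ρ γ₀ 0, Classical.arbitrary X), hγ₀, mem_univ _⟩
  obtain ⟨⟨z₀, x₀⟩, hmem, hminOn⟩ := hKX.exists_isMinOn hKXne
    (hFc.mono (Set.prod_mono hKsub subset_rfl))
  set m := F z₀ x₀ with hm
  have hz₀ : z₀ ∈ unitDisc := hKsub hmem.1
  have hlow : ∀ z ∈ unitDisc, ∀ x : X, m ≤ F z x := by
    intro z hz x
    obtain ⟨γ, hγ⟩ := hKcover z hz
    have h1 : m ≤ F (ρ γ z) (τ γ x) :=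
      isMinOn_iff.1 hminOn (ρ γ z, τ γ x) ⟨hγ, mem_univ _⟩
    rwa [hFinv γ z hz x] at h1
  have hcx₀ : ContinuousOn (fun z => F z x₀) unitDisc := by
    have : ContinuousOn ((fun p : ℂ × X => F p.1 p.2) ∘ fun z => (z, x₀)) unitDisc :=
      hFc.comp (Continuous.continuousOn (continuous_id.prodMk continuous_const))
        (fun z hz => ⟨hz, mem_univ _⟩)
    exact this
  exact ⟨x₀, m, harmonic_min_principle (hFh x₀) hcx₀ hz₀ (fun z hz => hlow z hz x₀), hlow⟩

/-- Each element acts on the interval by a monotone map. -/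
lemma sigma_monotone {Γ : Type*} [Group Γ] {σ : Γ → unitInterval → unitInterval}
    (hσ : IsActionByHomeomorphisms Γ unitInterval σ)
    (hfix0 : ∀ γ : Γ, σ γ 0 = 0) (γ : Γ) : Monotone (σ γ) := by
  have hinj : Function.Injective (σ γ) := by
    intro x y h
    have := congrArg (σ γ⁻¹) h
    rwa [← hσ.mul_act, ← hσ.mul_act, inv_mul_cancel, hσ.one_act, hσ.one_act] at this
  have : StrictMono (σ γ) := by
    haveI : Fact ((0 : ℝ) ≤ 1) := ⟨zero_le_one⟩
    refine (hσ.continuous_act γ).strictMono_of_inj_boundedOrder ?_ hinj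
    have hb : (⊥ : unitInterval) = 0 := rfl
    rw [hb, hfix0 γ, ← hb]
    exact bot_le
  exact this.monotone

/-- The least element of a nonempty closed invariant subset of the interval is a global
fixed point. -/
lemma least_fixed {Γ : Type*} [Group Γ] {σ : Γ → unitInterval → unitInterval}
    (hσ : IsActionByHomeomorphisms Γ unitInterval σ)
    (hfix0 : ∀ γ : Γ, σ γ 0 = 0)
    {S : Set unitInterval} (hSc : IsClosed S) (hSne : S.Nonempty)
    (hSinv : ∀ γ : Γ, ∀ x ∈ S, σ γ x ∈ S) :
    ∃ a ∈ S, ∀ γ : Γ, σ γ a = a := by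
  obtain ⟨a, haS, halb⟩ := hSc.isCompact.exists_isLeast hSne
  refine ⟨a, haS, fun γ => ?_⟩
  have h1 : a ≤ σ γ a := halb (hSinv γ a haS)
  have h2 : a ≤ σ γ⁻¹ a := halb (hSinv γ⁻¹ a haS)
  have h3 : σ γ a ≤ σ γ (σ γ⁻¹ a) := sigma_monotone hσ hfix0 γ h2
  rw [← hσ.mul_act, mul_inv_cancel, hσ.one_act] at h3
  exact le_antisymm h3 h1

/-- **Lemma 7.1 (transverse monotonicity).** Let `Γ` be a cocompact Fuchsian group acting
on `[0,1]` by homeomorphisms fixing `0` and `1`, with no finite orbit in `(0,1)`. If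
`f : 𝔻 × [0,1] → ℝ` is a `Γ`-invariant leafwise harmonic function with `f(·,0) = 0` and
`f(·,1) = 1`, then `f(z,·)` is weakly monotone increasing for every `z ∈ 𝔻`. -/
theorem transverse_monotonicity
    {Γ : Type*} [Group Γ] (ρ : Γ → ℂ → ℂ) (hΓ : IsCocompactFuchsian Γ ρ)
    (σ : Γ → unitInterval → unitInterval) (hσ : IsActionByHomeomorphisms Γ unitInterval σ)
    (hfix0 : ∀ γ : Γ, σ γ 0 = 0) (hfix1 : ∀ γ : Γ, σ γ 1 = 1)
    (hnofinite : ∀ x : unitInterval, 0 < (x : ℝ) → (x : ℝ) < 1 →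
      (Set.range fun γ : Γ => σ γ x).Infinite)
    (f : ℂ → unitInterval → ℝ)
    (hcont : ContinuousOn (fun p : ℂ × unitInterval => f p.1 p.2)
      (unitDisc ×ˢ (univ : Set unitInterval)))
    (hharm : ∀ x : unitInterval, HarmonicOnSet (fun z => f z x) unitDisc)
    (hinv : ∀ γ : Γ, ∀ z ∈ unitDisc, ∀ x : unitInterval, f (ρ γ z) (σ γ x) = f z x)
    (hbd0 : ∀ z ∈ unitDisc, f z 0 = 0) (hbd1 : ∀ z ∈ unitDisc, f z 1 = 1) :
    ∀ z ∈ unitDisc, Monotone (fun x : unitInterval => f z x) := by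
  have h0disc : (0 : ℂ) ∈ unitDisc := by simp [unitDisc]
  -- the action maps points back: ρ γ (ρ γ⁻¹ z) = z
  have hback : ∀ (γ : Γ), ∀ z ∈ unitDisc, ρ γ (ρ γ⁻¹ z) = z := by
    intro γ z hz
    rw [← hΓ.mul_act γ γ⁻¹ z hz, mul_inv_cancel, hΓ.one_act z hz]
  -- continuity of each slice x ↦ f z x for z in the disc
  have hslice : ∀ z ∈ unitDisc, Continuous fun x : unitInterval => f z x := by
    intro z hz
    exact hcont.comp_continuous (continuous_const.prodMk continuous_id)
      (fun x => ⟨hz, mem_univ _⟩)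
  -- Part A : f is nonnegative on the disc
  have hnonneg : ∀ z ∈ unitDisc, ∀ x : unitInterval, 0 ≤ f z x := by
    obtain ⟨x₀, m, hconst, hlow⟩ := exists_min_leaf hΓ σ f hcont hharm hinv
    have hm : 0 ≤ m := by
      by_contra hmneg
      push_neg at hmneg
      set S : Set unitInterval := {x | ∀ z ∈ unitDisc, f z x = m} with hS
      have hSc : IsClosed S := by
        have : S = ⋂ z ∈ unitDisc, {x | f z x = m} := by
          ext x; simp [hS]
        rw [this]
        exact isClosed_biInter fun z hz => isClosed_eq (hslice z hz) continuous_const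
      have hSne : S.Nonempty := ⟨x₀, hconst⟩
      have hSinv : ∀ γ : Γ, ∀ x ∈ S, σ γ x ∈ S := by
        intro γ x hx z hz
        have hw : ρ γ⁻¹ z ∈ unitDisc := hΓ.maps_disc γ⁻¹ z hz
        have := hinv γ (ρ γ⁻¹ z) hw x
        rw [hback γ z hz] at this
        rw [this]
        exact hx _ hw
      obtain ⟨a, haS, hafix⟩ := least_fixed hσ hfix0 hSc hSne hSinv
      have ha0 : a ≠ 0 := by
        intro h
        have := haS 0 h0disc
        rw [h, hbd0 0 h0disc] at this
        exact absurd this.symm (ne_of_lt hmneg)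
      have ha1 : a ≠ 1 := by
        intro h
        have := haS 0 h0disc
        rw [h, hbd1 0 h0disc] at this
        linarith
      have hapos : 0 < (a : ℝ) :=
        lt_of_le_of_ne a.2.1 (fun h => ha0 (Subtype.ext h.symm))
      have halt : (a : ℝ) < 1 :=
        lt_of_le_of_ne a.2.2 (fun h => ha1 (Subtype.ext h))
      have hinf := hnofinite a hapos halt
      have : (Set.range fun γ : Γ => σ γ a) ⊆ {a} := by
        rintro y ⟨γ, rfl⟩
        simp [hafix γ]
      exact hinf ((Set.finite_singleton a).subset this)
    intro z hz x
    exact le_trans hm (hlow z hz x)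
  -- Part B : the pair space
  set X := {p : unitInterval × unitInterval // p.1 ≤ p.2} with hX
  haveI : CompactSpace X := isCompact_iff_compactSpace.mp
    ((isClosed_le continuous_fst continuous_snd).isCompact)
  haveI : Nonempty X := ⟨⟨(0, 0), le_refl _⟩⟩
  set τ : Γ → X → X := fun γ p => ⟨(σ γ p.1.1, σ γ p.1.2), sigma_monotone hσ hfix0 γ p.2⟩
    with hτ
  set F : ℂ → X → ℝ := fun z p => f z p.1.2 - f z p.1.1 with hF
  have hFc : ContinuousOn (fun q : ℂ × X => F q.1 q.2) (unitDisc ×ˢ (univ : Set X)) := by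
    have hg2 : Continuous (fun q : ℂ × X => (q.1, q.2.1.2)) :=
      continuous_fst.prodMk (continuous_subtype_val.comp continuous_snd).snd
    have hg1 : Continuous (fun q : ℂ × X => (q.1, q.2.1.1)) :=
      continuous_fst.prodMk (continuous_subtype_val.comp continuous_snd).fst
    have c2 : ContinuousOn (fun q : ℂ × X => f q.1 q.2.1.2) (unitDisc ×ˢ (univ : Set X)) :=
      hcont.comp hg2.continuousOn (fun q hq => ⟨hq.1, mem_univ _⟩)
    have c1 : ContinuousOn (fun q : ℂ × X => f q.1 q.2.1.1) (unitDisc ×ˢ (univ : Set X)) :=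
      hcont.comp hg1.continuousOn (fun q hq => ⟨hq.1, mem_univ _⟩)
    exact c2.sub c1
  have hFh : ∀ p : X, HarmonicOnSet (fun z => F z p) unitDisc :=
    fun p => (hharm p.1.2).sub' (hharm p.1.1)
  have hFinv : ∀ γ : Γ, ∀ z ∈ unitDisc, ∀ p : X, F (ρ γ z) (τ γ p) = F z p := by
    intro γ z hz p
    simp only [hF, hτ]
    rw [hinv γ z hz p.1.2, hinv γ z hz p.1.1]
  obtain ⟨p₀, m', hconst', hlow'⟩ := exists_min_leaf hΓ τ F hFc hFh hFinv
  have hm' : 0 ≤ m' := by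
    by_contra hmneg
    push_neg at hmneg
    set C : Set (unitInterval × unitInterval) :=
      {q | q.1 ≤ q.2 ∧ ∀ z ∈ unitDisc, f z q.2 - f z q.1 = m'} with hC
    have hCc : IsClosed C := by
      have : C = {q : unitInterval × unitInterval | q.1 ≤ q.2} ∩
          ⋂ z ∈ unitDisc, {q | f z q.2 - f z q.1 = m'} := by
        ext q; simp [hC]
      rw [this]
      exact (isClosed_le continuous_fst continuous_snd).inter
        (isClosed_biInter fun z hz => isClosed_eq
          (((hslice z hz).comp continuous_snd).sub ((hslice z hz).comp continuous_fst))
          continuous_const)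
    set S : Set unitInterval := Prod.fst '' C with hS
    have hSc : IsClosed S := (hCc.isCompact.image continuous_fst).isClosed
    have hSne : S.Nonempty := ⟨p₀.1.1, ⟨p₀.1, ⟨p₀.2, fun z hz => hconst' z hz⟩, rfl⟩⟩
    have hSinv : ∀ γ : Γ, ∀ x ∈ S, σ γ x ∈ S := by
      rintro γ x ⟨q, ⟨hq1, hq2⟩, rfl⟩
      refine ⟨(σ γ q.1, σ γ q.2), ⟨sigma_monotone hσ hfix0 γ hq1, ?_⟩, rfl⟩
      intro z hz
      have hw : ρ γ⁻¹ z ∈ unitDisc := hΓ.maps_disc γ⁻¹ z hz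
      have h2 := hinv γ (ρ γ⁻¹ z) hw q.2
      have h1 := hinv γ (ρ γ⁻¹ z) hw q.1
      rw [hback γ z hz] at h2 h1
      rw [h2, h1]
      exact hq2 _ hw
    obtain ⟨a, haS, hafix⟩ := least_fixed hσ hfix0 hSc hSne hSinv
    obtain ⟨q, ⟨hq1, hq2⟩, hqa⟩ := haS
    have ha0 : a ≠ 0 := by
      intro h
      have := hq2 0 h0disc
      rw [hqa, h] at this
      rw [hbd0 0 h0disc] at this
      have hge := hnonneg 0 h0disc q.2
      linarith
    have ha1 : a ≠ 1 := by
      intro h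
      have hq21 : q.2 = 1 := by
        have : (1 : unitInterval) ≤ q.2 := by rw [← h, ← hqa]; exact hq1
        exact le_antisymm unitInterval.le_one' this
      have hq11 : q.1 = 1 := by rw [hqa, h]
      have hm0 := hq2 0 h0disc
      rw [hq11, hq21, hbd1 0 h0disc] at hm0
      linarith
    have hapos : 0 < (a : ℝ) :=
      lt_of_le_of_ne a.2.1 (fun h => ha0 (Subtype.ext h.symm))
    have halt : (a : ℝ) < 1 :=
      lt_of_le_of_ne a.2.2 (fun h => ha1 (Subtype.ext h))
    have hinf := hnofinite a hapos halt
    have : (Set.range fun γ : Γ => σ γ a) ⊆ {a} := by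
      rintro y ⟨γ, rfl⟩
      simp [hafix γ]
    exact hinf ((Set.finite_singleton a).subset this)
  intro z hz x y hxy
  have := hlow' z hz ⟨(x, y), hxy⟩
  simp only [hF] at this
  linarith
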